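/- Let B be an L-algebra. The set At_L({x}) of all atomic formulas in one variable x is finitely satisfiable in B (every finite subset is realized by some element of B) if and only if the trivial one-element L-algebra lies in the universal closure of B (i.e., satisfies every universal sentence true in B). -/

import Mathlib

open FirstOrder Language

/-- The trivial (one-element) `L`-structure on `Unit`. -/
instance trivialStructure (L : FirstOrder.Language) : L.Structure Unit :=
  ⟨fun _ _ => (), fun _ _ => True⟩

section Aux

variable {L : FirstOrder.Language}

/-- Collect the equations occurring in a bounded formula, with all variables relabeled
to the single variable of type `Unit`. -/
def myEqns : ∀ {n : ℕ}, L.BoundedFormula Empty n → List (L.Term Unit × L.Term Unit)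
  | _, FirstOrder.Language.BoundedFormula.falsum => []
  | _, FirstOrder.Language.BoundedFormula.equal t₁ t₂ =>
      [(t₁.relabel (fun _ => ()), t₂.relabel (fun _ => ()))]
  | _, FirstOrder.Language.BoundedFormula.rel _ _ => []
  | _, FirstOrder.Language.BoundedFormula.imp φ ψ => myEqns φ ++ myEqns ψ
  | _, FirstOrder.Language.BoundedFormula.all φ => myEqns φ

theorem term_realize_unit (t : L.Term Unit) (v : Unit → Unit) :
    t.realize v = () := rfl

theorem realize_transfer {B : Type*} [L.Structure B]
    (hrel : ∀ n, IsEmpty (L.Relations n)) {n : ℕ}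
    {ψ : L.BoundedFormula Empty n} (hψ : ψ.IsQF) (b : B)
    (hb : ∀ p ∈ myEqns ψ, p.1.realize (fun _ => b) = p.2.realize (fun _ => b))
    (v : Empty → B) (w : Empty → Unit) :
    (ψ.Realize v (fun _ => b) ↔ ψ.Realize w (fun _ => ())) := by
  induction hψ with
  | falsum => simp [BoundedFormula.Realize]
  | of_isAtomic h =>
    cases h with
    | equal t₁ t₂ =>
      simp only [BoundedFormula.realize_bdEqual]
      have h1 : ∀ (t : L.Term (Empty ⊕ Fin n)),
          t.realize (Sum.elim v (fun _ => b)) =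
            (t.relabel (fun _ => ())).realize (fun _ => b) := by
        intro t
        rw [Term.realize_relabel]
        congr 1
        funext x
        rcases x with x | x
        · exact x.elim
        · rfl
      rw [h1, h1]
      refine iff_of_true ?_ trivial
      exact hb (t₁.relabel (fun _ => ()), t₂.relabel (fun _ => ())) (by exact List.mem_singleton_self _)
    | rel R _ => exact ((hrel _).elim R)
  | imp h₁ h₂ ih₁ ih₂ =>
    simp only [BoundedFormula.realize_imp]
    rw [ih₁ (fun p hp => hb p (by simp [myEqns, hp])),
        ih₂ (fun p hp => hb p (by simp [myEqns, hp]))]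

/-- Conjunction of a list of equations, as a bounded formula in one variable. -/
def conjList (l : List (L.Term Unit × L.Term Unit)) : L.BoundedFormula Empty 1 :=
  (l.map (fun p => Term.bdEqual (p.1.relabel (fun _ => (Sum.inr 0 : Empty ⊕ Fin 1)))
    (p.2.relabel (fun _ => (Sum.inr 0 : Empty ⊕ Fin 1))))).foldr (· ⊓ ·) ⊤

theorem conjList_isQF (l : List (L.Term Unit × L.Term Unit)) : (conjList l).IsQF := by
  induction l with
  | nil => exact BoundedFormula.IsQF.top
  | cons p l ih =>
    exact (BoundedFormula.IsAtomic.equal _ _).isQF.inf ih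

theorem conjList_realize {M : Type*} [L.Structure M] (l : List (L.Term Unit × L.Term Unit))
    (v : Empty → M) (xs : Fin 1 → M) :
    (conjList l).Realize v xs ↔
      ∀ p ∈ l, p.1.realize (fun _ => xs 0) = p.2.realize (fun _ => xs 0) := by
  induction l with
  | nil => simp [conjList]
  | cons p l ih =>
    have key : ∀ t : L.Term Unit,
        (t.relabel (fun _ => (Sum.inr 0 : Empty ⊕ Fin 1))).realize (Sum.elim v xs) =
          t.realize (fun _ => xs 0) := by
      intro t
      rw [Term.realize_relabel]
      rfl
    simp only [conjList, List.map_cons, List.foldr_cons, BoundedFormula.realize_inf,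
      BoundedFormula.realize_bdEqual, List.mem_cons]
    rw [key, key]
    rw [show (List.foldr (· ⊓ ·) ⊤ (l.map (fun p =>
        Term.bdEqual (p.1.relabel (fun _ => (Sum.inr 0 : Empty ⊕ Fin 1)))
          (p.2.relabel (fun _ => (Sum.inr 0 : Empty ⊕ Fin 1)))))).Realize v xs ↔
        ∀ p ∈ l, p.1.realize (fun _ => xs 0) = p.2.realize (fun _ => xs 0) from ih]
    constructor
    · rintro ⟨h1, h2⟩ q hq
      rcases hq with rfl | hq
      exacts [h1, h2 q hq]
    · intro hall
      exact ⟨hall p (.inl rfl), fun q hq => hall q (.inr hq)⟩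

end Aux

/-- For a functional language `L` and an `L`-algebra `B`: the set `At_L({x})` of all
atomic formulas in one variable is finitely satisfiable in `B` if and only if the trivial
one-element `L`-algebra satisfies every universal sentence true in `B` (i.e. lies in the
universal closure of `B`). -/
theorem stmt3 (L : FirstOrder.Language) (B : Type*) [L.Structure B]
    (hrel : ∀ n, IsEmpty (L.Relations n)) :
    (∀ S₀ : Finset (L.Term Unit × L.Term Unit), ∃ b : B,
        ∀ p ∈ S₀, p.1.realize (fun _ => b) = p.2.realize (fun _ => b)) ↔
      ∀ (n : ℕ) (ψ : L.BoundedFormula Empty n), ψ.IsQF →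
        (B ⊨ ψ.alls) → (Unit ⊨ ψ.alls) := by
  classical
  constructor
  · intro h n ψ hψ hB
    obtain ⟨b, hb⟩ := h (myEqns ψ).toFinset
    refine BoundedFormula.realize_alls.2 fun xs => ?_
    have hxs : xs = fun _ => () := funext fun _ => rfl
    rw [hxs]
    exact (realize_transfer hrel hψ b
      (fun p hp => hb p (List.mem_toFinset.2 hp)) default default).1
      (BoundedFormula.realize_alls.1 hB (fun _ => b))
  · intro h S₀
    by_contra hc
    push_neg at hc
    have hB : B ⊨ (conjList S₀.toList).not.alls := by
      refine BoundedFormula.realize_alls.2 fun xs => ?_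
      rw [BoundedFormula.realize_not, conjList_realize]
      intro hall
      obtain ⟨p, hp, hne⟩ := hc (xs 0)
      exact hne (hall p (Finset.mem_toList.2 hp))
    have hU := h 1 _ ((conjList_isQF S₀.toList).not) hB
    have hU' := BoundedFormula.realize_alls.1 hU (fun _ => ())
    rw [BoundedFormula.realize_not, conjList_realize] at hU'
    exact hU' fun p _ => Subsingleton.elim _ _
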